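/- For an integer K ≥ 1, Σ_{a+b=K-1} H*(a,b) = Σ_{r=1}^K H*(K-r) ζ(2r+1), where the left sum is over nonnegative integers a, b with a+b = K-1, H*(a,b) = ζ*(2^a, 3, 2^b), H*(n) = ζ*(2^n) with H*(0) = 1. -/

import Mathlib

open Filter Finset Real

/-- `zeta k` : the Riemann zeta value `ζ(k) = Σ_{m≥1} 1/m^k`, with the convention `ζ(0) = -1/2`. -/
noncomputable def zeta (k : ℕ) : ℝ :=
  if k = 0 then -1/2 else limUnder atTop (fun N => ∑ m ∈ Finset.range N, 1/((m+1 : ℝ))^k)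

/-- `zetaA k` : the alternating zeta value `ζ(k̄) = Σ_{m≥1} (-1)^m/m^k`,
with the convention `ζ(0̄) = -1/2`. -/
noncomputable def zetaA (k : ℕ) : ℝ :=
  if k = 0 then -1/2 else
    limUnder atTop (fun N => ∑ m ∈ Finset.range N, (-1 : ℝ)^(m+1)/((m+1 : ℝ))^k)

/-- `dzeta r s = ζ(r,s) = Σ_{m≥2} (1/m^s) Σ_{j=1}^{m-1} 1/j^r`. -/
noncomputable def dzeta (r s : ℕ) : ℝ :=
  limUnder atTop (fun N => ∑ m ∈ Finset.range N,
    (1/((m+2 : ℝ))^s) * ∑ j ∈ Finset.range (m+1), 1/((j+1 : ℝ))^r)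

/-- `dzetaA1 r s = ζ(r̄,s) = Σ_{m≥2} (1/m^s) Σ_{j=1}^{m-1} (-1)^j/j^r`. -/
noncomputable def dzetaA1 (r s : ℕ) : ℝ :=
  limUnder atTop (fun N => ∑ m ∈ Finset.range N,
    (1/((m+2 : ℝ))^s) * ∑ j ∈ Finset.range (m+1), (-1 : ℝ)^(j+1)/((j+1 : ℝ))^r)

/-- `dzetaA2 r s = ζ(r,s̄) = Σ_{m≥2} ((-1)^m/m^s) Σ_{j=1}^{m-1} 1/j^r`. -/
noncomputable def dzetaA2 (r s : ℕ) : ℝ :=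
  limUnder atTop (fun N => ∑ m ∈ Finset.range N,
    ((-1 : ℝ)^(m+2)/((m+2 : ℝ))^s) * ∑ j ∈ Finset.range (m+1), 1/((j+1 : ℝ))^r)

/-- `dzetaA3 r s = ζ(r̄,s̄) = Σ_{m≥2} ((-1)^m/m^s) Σ_{j=1}^{m-1} (-1)^j/j^r`. -/
noncomputable def dzetaA3 (r s : ℕ) : ℝ :=
  limUnder atTop (fun N => ∑ m ∈ Finset.range N,
    ((-1 : ℝ)^(m+2)/((m+2 : ℝ))^s) * ∑ j ∈ Finset.range (m+1), (-1 : ℝ)^(j+1)/((j+1 : ℝ))^r)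

/-- Multiple zeta star value `ζ*(k₁,…,k_n) = Σ_{1 ≤ m₁ ≤ … ≤ m_n} ∏ 1/m_i^{k_i}`. -/
noncomputable def mzvStar (n : ℕ) (k : Fin n → ℕ) : ℝ :=
  ∑' m : {f : Fin n → ℕ+ // Monotone f}, ∏ i, (1 : ℝ)/((m.1 i : ℝ))^(k i)

/-- Multiple zeta value `ζ(k₁,…,k_n) = Σ_{1 ≤ m₁ < … < m_n} ∏ 1/m_i^{k_i}`. -/
noncomputable def mzv (n : ℕ) (k : Fin n → ℕ) : ℝ :=
  ∑' m : {f : Fin n → ℕ+ // StrictMono f}, ∏ i, (1 : ℝ)/((m.1 i : ℝ))^(k i)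

/-- The exponent string `(2,…,2,3,2,…,2)` with `a` twos before the `3` and `b` twos after. -/
def expo232 (a b : ℕ) : Fin (a+b+1) → ℕ := fun i => if (i : ℕ) = a then 3 else 2

/-- `H*(a,b) = ζ*(2^a, 3, 2^b)`. -/
noncomputable def Hstar (a b : ℕ) : ℝ := mzvStar (a+b+1) (expo232 a b)

/-- `H*(n) = ζ*(2^n)` (so `H*(0) = 1`). -/
noncomputable def HstarN (n : ℕ) : ℝ := mzvStar n (fun _ => 2)

/-- `H(a,b) = ζ(2^a, 3, 2^b)`. -/
noncomputable def Hmzv (a b : ℕ) : ℝ := mzv (a+b+1) (expo232 a b)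

/-- `H(n) = ζ(2^n)` (so `H(0) = 1`). -/
noncomputable def HmzvN (n : ℕ) : ℝ := mzv n (fun _ => 2)

open scoped ENNReal NNReal

namespace HstarAux

abbrev MonoT (n : ℕ) := {f : Fin n → ℕ+ // Monotone f}
abbrev SymT (n : ℕ) := {s : Multiset ℕ+ // Multiset.card s = n}

noncomputable def encE (n : ℕ) : MonoT n ≃ SymT n := by
  refine Equiv.ofBijective (fun m => ⟨(List.ofFn m.1 : List ℕ+), by simp⟩) ⟨?_, ?_⟩
  · rintro ⟨f, hf⟩ ⟨g, hg⟩ h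
    have h' : List.Perm (List.ofFn f) (List.ofFn g) := by
      simpa [Multiset.coe_eq_coe] using congrArg Subtype.val h
    have := List.Perm.eq_of_pairwise' hf.sortedLE_ofFn.pairwise hg.sortedLE_ofFn.pairwise h'
    exact Subtype.ext (List.ofFn_injective this)
  · rintro ⟨s, hs⟩
    set l := s.sort (· ≤ ·) with hl
    have hlen : l.length = n := by rw [hl, Multiset.length_sort, hs]
    have hsorted : l.Pairwise (· ≤ ·) := Multiset.pairwise_sort s _
    refine ⟨⟨fun i => l.get (Fin.cast hlen.symm i), ?_⟩, ?_⟩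
    · intro i j hij
      exact hsorted.rel_get_of_le (by simpa using hij)
    · apply Subtype.ext
      have : List.ofFn (fun i : Fin n => l.get (Fin.cast hlen.symm i)) = l := by
        apply List.ext_get (by simp [hlen])
        intro i h1 h2
        simp [List.get_ofFn]
      simp only [this]
      exact Multiset.sort_eq s _

lemma tsum_monoT_eq (n : ℕ) (F : Multiset ℕ+ → ℝ≥0∞) :
    ∑' m : MonoT n, F ((List.ofFn m.1 : List ℕ+) : Multiset ℕ+) = ∑' s : SymT n, F s.1 :=
  (encE n).tsum_eq (fun s => F s.1)

noncomputable def w (v : ℕ+) : ℝ≥0∞ := (((v:ℕ):ℝ≥0∞))⁻¹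

noncomputable def mzvStarE (n : ℕ) (k : Fin n → ℕ) : ℝ≥0∞ :=
  ∑' m : MonoT n, ∏ i, (w (m.1 i))^(k i)

lemma w_ne_top (v : ℕ+) : w v ≠ ∞ := by
  simp [w, ENNReal.inv_ne_top]

lemma w_le_one (v : ℕ+) : w v ≤ 1 := by
  rw [w, ENNReal.inv_le_one]
  exact_mod_cast v.one_le

lemma toReal_w (v : ℕ+) : (w v).toReal = 1/((v:ℕ):ℝ) := by
  simp [w, ENNReal.toReal_inv, one_div]

lemma mzvStar_eq (n : ℕ) (k : Fin n → ℕ) : mzvStar n k = (mzvStarE n k).toReal := by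
  rw [mzvStarE, ENNReal.tsum_toReal_eq]
  · apply tsum_congr
    intro m
    rw [ENNReal.toReal_prod]
    apply Finset.prod_congr rfl
    intro i _
    rw [ENNReal.toReal_pow, toReal_w]
    rw [div_pow, one_pow]
  · intro m
    exact ENNReal.prod_ne_top (fun i _ => ENNReal.pow_ne_top (w_ne_top _))

noncomputable def zE (k : ℕ) : ℝ≥0∞ := ∑' v : ℕ+, (w v)^k

lemma zeta_eq {k : ℕ} (hk : 2 ≤ k) : zeta k = (zE k).toReal := by
  have hk0 : k ≠ 0 := by omega
  have hsum : Summable (fun m : ℕ => 1/((m+1:ℝ))^k) := by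
    have h1 := (Real.summable_one_div_nat_pow (p := k)).mpr (by omega)
    have := (summable_nat_add_iff (f := fun n : ℕ => 1/(n:ℝ)^k) 1).mpr h1
    simpa using this
  rw [zeta, if_neg hk0, (hsum.hasSum.tendsto_sum_nat).limUnder_eq]
  rw [zE, ENNReal.tsum_toReal_eq (fun v => ENNReal.pow_ne_top (w_ne_top v))]
  simp_rw [ENNReal.toReal_pow, toReal_w]
  rw [← (Equiv.pnatEquivNat.symm).tsum_eq (fun v : ℕ+ => (1/((v:ℕ):ℝ))^k)]
  apply tsum_congr
  intro m
  simp [Equiv.pnatEquivNat, Nat.succPNat, div_pow]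

end HstarAux
namespace HstarAux

lemma summable_pnat_two : Summable (fun v : ℕ+ => (((v:ℕ):ℝ))⁻¹^2) := by
  rw [← (Equiv.pnatEquivNat.symm).summable_iff]
  have h1 := (Real.summable_one_div_nat_pow (p := 2)).mpr (by omega)
  have := (summable_nat_add_iff (f := fun n : ℕ => 1/(n:ℝ)^2) 1).mpr h1
  apply this.congr
  intro m
  simp [Equiv.pnatEquivNat, Nat.succPNat, one_div, inv_pow]

lemma zE_two_ne_top : zE 2 ≠ ∞ := by
  rw [zE]
  have hrw : ∀ v : ℕ+, (w v)^2 = (((((v:ℕ):ℝ≥0))⁻¹^2 : ℝ≥0) : ℝ≥0∞) := by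
    intro v
    rw [ENNReal.coe_pow, ENNReal.coe_inv (by exact_mod_cast v.ne_zero)]
    norm_num [w]
  simp_rw [hrw]
  rw [ENNReal.tsum_coe_ne_top_iff_summable]
  rw [← NNReal.summable_coe]
  apply summable_pnat_two.congr
  intro v
  push_cast
  ring

lemma zE_ne_top {k : ℕ} (hk : 2 ≤ k) : zE k ≠ ∞ := by
  refine ne_top_of_le_ne_top zE_two_ne_top (ENNReal.tsum_le_tsum (fun v => ?_))
  exact pow_le_pow_of_le_one zero_le (w_le_one v) hk

lemma tsum_pi_prod (n : ℕ) (g : ℕ+ → ℝ≥0∞) :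
    ∑' f : Fin n → ℕ+, ∏ i, g (f i) = (∑' v, g v)^n := by
  induction n with
  | zero =>
    simp only [pow_zero, Finset.univ_eq_empty, Finset.prod_empty]
    exact tsum_eq_single default (fun b hb => absurd (Subsingleton.elim b default) hb)
  | succ n ih =>
    rw [← (Fin.consEquiv (fun _ : Fin (n+1) => ℕ+)).tsum_eq]
    rw [ENNReal.tsum_prod']
    have : ∀ (v : ℕ+) (f : Fin n → ℕ+),
        (∏ i, g ((Fin.consEquiv (fun _ : Fin (n+1) => ℕ+)) (v, f) i)) = g v * ∏ i, g (f i) := by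
      intro v f
      rw [Fin.prod_univ_succ]
      simp [Fin.consEquiv]
    simp_rw [this, ENNReal.tsum_mul_left, ih, ENNReal.tsum_mul_right]
    rw [pow_succ]
    ring

lemma mzvStarE_le_two (n : ℕ) (k : Fin n → ℕ) (hk : ∀ i, 2 ≤ k i) :
    mzvStarE n k ≤ mzvStarE n (fun _ => 2) := by
  refine ENNReal.tsum_le_tsum (fun m => Finset.prod_le_prod' (fun i _ => ?_))
  exact pow_le_pow_of_le_one zero_le (w_le_one _) (hk i)

lemma mzvStarE_two_ne_top (n : ℕ) : mzvStarE n (fun _ => 2) ≠ ∞ := by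
  have hle : mzvStarE n (fun _ => 2) ≤ ∑' f : Fin n → ℕ+, ∏ i, (w (f i))^2 := by
    rw [mzvStarE]
    exact ENNReal.tsum_comp_le_tsum_of_injective Subtype.val_injective _
  refine ne_top_of_le_ne_top ?_ hle
  rw [tsum_pi_prod n (fun v => (w v)^2)]
  exact ENNReal.pow_ne_top zE_two_ne_top

end HstarAux
namespace HstarAux

noncomputable def QE (s : Multiset ℕ+) : ℝ≥0∞ := (s.map (fun v => (w v)^2)).prod
noncomputable def RE (s : Multiset ℕ+) : ℝ≥0∞ := (s.map w).sum

lemma QE_ofFn {n : ℕ} (f : Fin n → ℕ+) :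
    QE ((List.ofFn f : List ℕ+) : Multiset ℕ+) = ∏ j, (w (f j))^2 := by
  simp [QE, Multiset.map_coe, Multiset.prod_coe, List.map_ofFn, List.prod_ofFn, Function.comp]

lemma RE_ofFn {n : ℕ} (f : Fin n → ℕ+) :
    RE ((List.ofFn f : List ℕ+) : Multiset ℕ+) = ∑ j, w (f j) := by
  simp [RE, Multiset.map_coe, Multiset.sum_coe, List.map_ofFn, List.sum_ofFn, Function.comp]

lemma mzvStarE_two_eq_sym (n : ℕ) :
    mzvStarE n (fun _ => 2) = ∑' t : SymT n, QE t.1 := by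
  rw [mzvStarE, ← tsum_monoT_eq n QE]
  exact tsum_congr (fun m => (QE_ofFn m.1).symm)

lemma mzvStarE_expo (a b : ℕ) :
    mzvStarE (a+b+1) (expo232 a b) =
      ∑' m : MonoT (a+b+1), (∏ j, (w (m.1 j))^2) * w (m.1 ⟨a, by omega⟩) := by
  rw [mzvStarE]
  apply tsum_congr
  intro m
  have key : ∀ j : Fin (a+b+1), (w (m.1 j))^(expo232 a b j)
      = (w (m.1 j))^2 * (if j = ⟨a, by omega⟩ then w (m.1 j) else 1) := by
    intro j
    by_cases h : (j:ℕ) = a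
    · have hj : j = ⟨a, by omega⟩ := Fin.ext h
      simp [expo232, h, hj, pow_succ]
    · have hj : j ≠ ⟨a, by omega⟩ := fun hh => h (by rw [hh])
      simp [expo232, h, hj]
  rw [Finset.prod_congr rfl (fun j _ => key j), Finset.prod_mul_distrib,
    Finset.prod_ite_eq' Finset.univ _ (fun j => w (m.1 j))]
  simp

lemma lhsE (K : ℕ) (hK : 1 ≤ K) :
    ∑ p ∈ Finset.HasAntidiagonal.antidiagonal (K-1), mzvStarE (p.1+p.2+1) (expo232 p.1 p.2)
      = ∑' s : SymT K, QE s.1 * RE s.1 := by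
  have hlt : ∀ a : ℕ, min a (K-1) < K := fun a => by omega
  rw [Finset.Nat.sum_antidiagonal_eq_sum_range_succ_mk]
  have hK1 : K - 1 + 1 = K := by omega
  rw [Nat.succ_eq_add_one, hK1]
  have step : ∀ a ∈ Finset.range K, mzvStarE (a + (K-1-a) + 1) (expo232 a (K-1-a))
      = ∑' m : MonoT K, (∏ j, (w (m.1 j))^2) * w (m.1 ⟨min a (K-1), hlt a⟩) := by
    intro a ha
    rw [Finset.mem_range] at ha
    obtain ⟨b, hb⟩ : ∃ b, K - 1 - a = b := ⟨_, rfl⟩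
    have hKab : K = a + b + 1 := by omega
    rw [hb, mzvStarE_expo]
    subst hKab
    have hidx : (⟨min a (a+b+1-1), hlt a⟩ : Fin (a+b+1)) = ⟨a, by omega⟩ := by
      apply Fin.ext; simp
    rw [hidx]
  rw [Finset.sum_congr rfl step, ← Summable.tsum_finsetSum (fun i _ => ENNReal.summable)]
  rw [← tsum_monoT_eq K (fun s => QE s * RE s)]
  apply tsum_congr
  intro m
  rw [← Finset.mul_sum, QE_ofFn, RE_ofFn]
  congr 1
  rw [← Fin.sum_univ_eq_sum_range (fun i => w (m.1 ⟨min i (K-1), hlt i⟩))]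
  apply Finset.sum_congr rfl
  intro j _
  congr 1
  apply congrArg
  apply Fin.ext
  have := j.isLt
  simp
  omega

end HstarAux
namespace HstarAux

lemma rhsE_r (K r : ℕ) (hr1 : 1 ≤ r) (hrK : r ≤ K) :
    mzvStarE (K-r) (fun _ => 2) * zE (2*r+1)
      = ∑' q : SymT K × ℕ+,
          (if Multiset.replicate r q.2 ≤ q.1.1 then QE q.1.1 * w q.2 else 0) := by
  rw [mzvStarE_two_eq_sym, zE]
  set g : SymT K × ℕ+ → ℝ≥0∞ := fun q =>
    if Multiset.replicate r q.2 ≤ q.1.1 then QE q.1.1 * w q.2 else 0 with hg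
  set φ : SymT (K-r) × ℕ+ → SymT K × ℕ+ := fun q =>
    (⟨q.1.1 + Multiset.replicate r q.2, by
        simp [q.1.2]; omega⟩, q.2) with hφ
  have hinj : Function.Injective φ := by
    rintro ⟨⟨t₁, h₁⟩, v₁⟩ ⟨⟨t₂, h₂⟩, v₂⟩ h
    simp only [hφ, Prod.mk.injEq, Subtype.mk.injEq] at h
    obtain ⟨h3, h4⟩ := h
    subst h4
    exact by simp_all
  have hsupp : Function.support g ⊆ Set.range φ := by
    rintro ⟨⟨s, hs⟩, v⟩ hq
    simp only [Function.mem_support, hg] at hq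
    have hle : Multiset.replicate r v ≤ s := by
      by_contra hc; simp [hc] at hq
    refine ⟨⟨⟨s - Multiset.replicate r v, ?_⟩, v⟩, ?_⟩
    · rw [Multiset.card_sub hle, hs, Multiset.card_replicate]
    · simp only [hφ, Prod.mk.injEq, Subtype.mk.injEq]
      exact ⟨tsub_add_cancel_of_le hle, trivial⟩
  have hterm : ∀ q : SymT (K-r) × ℕ+, g (φ q) = QE q.1.1 * (w q.2)^(2*r+1) := by
    rintro ⟨⟨t, ht⟩, v⟩
    have hle : Multiset.replicate r v ≤ t + Multiset.replicate r v := le_add_self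
    simp only [hφ, hg, hle, if_pos]
    rw [QE, Multiset.map_add, Multiset.prod_add]
    rw [Multiset.map_replicate, Multiset.prod_replicate, ← QE]
    rw [← pow_mul, pow_succ, pow_mul]
    ring
  calc (∑' t : SymT (K-r), QE t.1) * (∑' v : ℕ+, (w v)^(2*r+1))
      = ∑' t : SymT (K-r), QE t.1 * ∑' v : ℕ+, (w v)^(2*r+1) := ENNReal.tsum_mul_right.symm
    _ = ∑' (t : SymT (K-r)) (v : ℕ+), QE t.1 * (w v)^(2*r+1) := by
        exact tsum_congr (fun t => ENNReal.tsum_mul_left.symm)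
    _ = ∑' q : SymT (K-r) × ℕ+, QE q.1.1 * (w q.2)^(2*r+1) := (ENNReal.tsum_prod' (f := fun q : SymT (K-r) × ℕ+ => QE q.1.1 * (w q.2)^(2*r+1))).symm
    _ = ∑' q : SymT (K-r) × ℕ+, g (φ q) := tsum_congr (fun q => (hterm q).symm)
    _ = ∑' q : SymT K × ℕ+, g q := hinj.tsum_eq hsupp

lemma rhsE (K : ℕ) (hK : 1 ≤ K) :
    ∑ r ∈ Finset.Icc 1 K, mzvStarE (K-r) (fun _ => 2) * zE (2*r+1)
      = ∑' s : SymT K, QE s.1 * RE s.1 := by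
  have step : ∀ r ∈ Finset.Icc 1 K, mzvStarE (K-r) (fun _ => 2) * zE (2*r+1)
      = ∑' q : SymT K × ℕ+,
          (if Multiset.replicate r q.2 ≤ q.1.1 then QE q.1.1 * w q.2 else 0) := by
    intro r hr
    rw [Finset.mem_Icc] at hr
    exact rhsE_r K r hr.1 hr.2
  rw [Finset.sum_congr rfl step, ← Summable.tsum_finsetSum (fun i _ => ENNReal.summable)]
  rw [ENNReal.tsum_prod']
  apply tsum_congr
  rintro ⟨s, hs⟩
  -- inner: ∑' v, ∑ r in Icc 1 K, ite ... = QE s * RE s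
  have inner : ∀ v : ℕ+,
      (∑ r ∈ Finset.Icc 1 K, if Multiset.replicate r v ≤ s then QE s * w v else 0)
        = (s.count v : ℝ≥0∞) * (QE s * w v) := by
    intro v
    have hcond : ∀ r : ℕ, (Multiset.replicate r v ≤ s) ↔ r ≤ s.count v :=
      fun r => (Multiset.le_count_iff_replicate_le).symm
    simp_rw [hcond]
    rw [← Finset.sum_filter]
    have hfil : (Finset.Icc 1 K).filter (fun r => r ≤ s.count v) = Finset.Icc 1 (s.count v) := by
      have hcK : s.count v ≤ K := by
        have := Multiset.count_le_card v s
        omega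
      ext r
      simp only [Finset.mem_filter, Finset.mem_Icc]
      omega
    rw [hfil, Finset.sum_const, Nat.card_Icc]
    simp [nsmul_eq_mul]
  simp_rw [inner]
  -- ∑' v, count v * (QE s * w v) = QE s * RE s
  have : ∀ v : ℕ+, (s.count v : ℝ≥0∞) * (QE s * w v) = QE s * ((s.count v : ℝ≥0∞) * w v) := by
    intro v; ring
  simp_rw [this, ENNReal.tsum_mul_left]
  congr 1
  rw [tsum_eq_sum (s := s.toFinset)
    (f := fun v : ℕ+ => (s.count v : ℝ≥0∞) * w v)
    (by intro v hv; simp [Multiset.count_eq_zero_of_notMem (by simpa using hv)])]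
  rw [RE, Finset.sum_multiset_map_count]
  apply Finset.sum_congr rfl
  intro v _
  rw [nsmul_eq_mul]

end HstarAux
open HstarAux
theorem Hstar_diag_sum (K : ℕ) (hK : 1 ≤ K) :
    ∑ p ∈ Finset.HasAntidiagonal.antidiagonal (K-1), Hstar p.1 p.2
      = ∑ r ∈ Finset.Icc 1 K, HstarN (K-r) * zeta (2*r+1) := by
  classical
  have hfin : ∀ a b : ℕ, mzvStarE (a+b+1) (expo232 a b) ≠ ⊤ := by
    intro a b
    refine ne_top_of_le_ne_top (mzvStarE_two_ne_top _) (mzvStarE_le_two _ _ ?_)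
    intro i
    simp only [expo232]
    split <;> omega
  have hL : ∑ p ∈ Finset.HasAntidiagonal.antidiagonal (K-1), Hstar p.1 p.2
      = (∑' s : SymT K, QE s.1 * RE s.1).toReal := by
    rw [← lhsE K hK, ENNReal.toReal_sum (fun p _ => hfin p.1 p.2)]
    exact Finset.sum_congr rfl (fun p _ => by rw [Hstar, mzvStar_eq])
  have hR : ∑ r ∈ Finset.Icc 1 K, HstarN (K-r) * zeta (2*r+1)
      = (∑' s : SymT K, QE s.1 * RE s.1).toReal := by
    rw [← rhsE K hK, ENNReal.toReal_sum]
    · apply Finset.sum_congr rfl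
      intro r hr
      rw [Finset.mem_Icc] at hr
      rw [ENNReal.toReal_mul, HstarN, mzvStar_eq, zeta_eq (by omega)]
    · intro r hr
      rw [Finset.mem_Icc] at hr
      exact ENNReal.mul_ne_top (mzvStarE_two_ne_top _) (zE_ne_top (by omega))
  rw [hL, hR]
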